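/- Given elements v ≤ w in a Coxeter group W and a fixed reduced expression for w, there exists a unique positive distinguished subexpression for v; that is, a unique subexpression v = t_1 t_2 ... t_n of the reduced word s_{i_1} ... s_{i_n} (each t_j ∈ {1, s_{i_j}}) such that for all j, the partial product v_{(j-1)} = t_1...t_{j-1} satisfies v_{(j-1)} < v_{(j-1)} s_{i_j} in Bruhat order. -/

import Mathlib

open List

open scoped Classical

/-- The Bruhat order on a Coxeter group, via the subword property:
`v ≤ w` iff some reduced word for `w` contains a sublist that is a reduced word for `v`. -/
def BruhatLE {B W : Type*} [Group W] {M : CoxeterMatrix B}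
    (cs : CoxeterSystem M W) (v w : W) : Prop :=
  ∃ ω : List B, cs.IsReduced ω ∧ cs.wordProd ω = w ∧
    ∃ ω' : List B, ω'.Sublist ω ∧ cs.IsReduced ω' ∧ cs.wordProd ω' = v

namespace PDSAux

section GenericGroup

variable {G : Type*} [Group G]

theorem muleq_iff (g h c t : G) : g * t * h = c ↔ t = g⁻¹ * c * h⁻¹ := by
  constructor
  · rintro rfl; group
  · rintro rfl; group

theorem muleq_iff'' (A cc d e t x : G) :
    A * (cc * x * d) * e = t ↔ x = cc⁻¹ * A⁻¹ * t * e⁻¹ * d⁻¹ := by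
  constructor
  · rintro rfl; group
  · rintro rfl; group

variable {a b : G} (ha : a * a = 1) (hb : b * b = 1)

include hb in
theorem binv : b⁻¹ = b := by
  rw [inv_eq_iff_mul_eq_one, hb]

include ha hb in
theorem key2 : ∀ k : ℕ, b * ((b * a)⁻¹) ^ k = (b * a) ^ k * b := by
  intro k
  induction k with
  | zero => simp
  | succ k ih =>
    rw [pow_succ, ← mul_assoc, ih, mul_inv_rev, binv hb, binv ha, pow_succ]
    group

include ha hb in
theorem iff1 (k : ℕ) (t : G) :
    (((b * a)⁻¹) ^ k * t * (b * a) ^ k = b) ↔ t = (b * a) ^ (2 * k) * b := by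
  rw [muleq_iff]
  have e : (((b*a)⁻¹)^k)⁻¹ * b * ((b*a)^k)⁻¹ = (b*a)^(2*k) * b := by
    rw [two_mul, pow_add, mul_assoc ((b*a)^k) ((b*a)^k) b, ← key2 ha hb k, inv_pow]
    group
  rw [e]

include ha hb in
theorem iff2 (k : ℕ) (t : G) :
    (b * ((((b * a)⁻¹) ^ k) * t * (b * a) ^ k) * b = a) ↔
      t = (b * a) ^ (2 * k + 1) * b := by
  rw [show b * ((((b * a)⁻¹) ^ k) * t * (b * a) ^ k) * b
        = (b * ((b * a)⁻¹) ^ k) * t * ((b * a) ^ k * b)  by group, muleq_iff]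
  have e2 : (b * ((b*a)⁻¹)^k)⁻¹ * a * ((b*a)^k * b)⁻¹ = (b*a)^(2*k+1) * b := by
    have h1 : (b*a)^(2*k+1) * b = (b*a)^k * (b * a * b) * ((b*a)⁻¹)^k := by
      rw [show 2*k+1 = k+1+k  by ring, pow_add, pow_succ,
        mul_assoc ((b*a)^k*(b*a)) ((b*a)^k) b, ← key2 ha hb k]
      group
    rw [h1, inv_pow, mul_inv_rev, mul_inv_rev, binv hb, inv_inv]
    group
  rw [e2]

end GenericGroup

/-- Count (mod 2) of occurrences of `t` in a list. -/
noncomputable def countZ {W : Type*} (l : List W) (t : W) : ZMod 2 :=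
  (l.map (fun x => if x = t then (1 : ZMod 2) else 0)).sum

@[simp] theorem countZ_nil {W : Type*} (t : W) : countZ [] t = 0 := rfl

theorem countZ_cons {W : Type*} (x : W) (l : List W) (t : W) :
    countZ (x :: l) t = (if x = t then 1 else 0) + countZ l t := by
  simp [countZ]

theorem countZ_append {W : Type*} (l₁ l₂ : List W) (t : W) :
    countZ (l₁ ++ l₂) t = countZ l₁ t + countZ l₂ t := by
  simp [countZ]

theorem countZ_map {W : Type*} (l : List W) (f : W → W) (t t' : W)
    (hf : ∀ x, f x = t ↔ x = t') :
    countZ (l.map f) t = countZ l t' := by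
  induction l with
  | nil => simp
  | cons x l ih =>
    rw [List.map_cons, countZ_cons, countZ_cons, ih]
    congr 1
    simp only [hf x]

theorem countZ_eq_zero_of_not_mem {W : Type*} {l : List W} {t : W} (h : t ∉ l) :
    countZ l t = 0 := by
  induction l with
  | nil => simp
  | cons x l ih =>
    rw [countZ_cons]
    rw [List.mem_cons, not_or] at h
    rw [if_neg (fun hx => h.1 hx.symm), ih h.2, add_zero]

theorem mem_of_countZ_ne_zero {W : Type*} {l : List W} {t : W} (h : countZ l t ≠ 0) :
    t ∈ l := by
  by_contra hm
  exact h (countZ_eq_zero_of_not_mem hm)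

theorem countZ_reverse {W : Type*} (l : List W) (t : W) :
    countZ l.reverse t = countZ l t := by
  induction l with
  | nil => simp
  | cons x l ih => rw [List.reverse_cons, countZ_append, countZ_cons, ih, countZ_cons]; simp [add_comm]

variable {B W : Type*} [Group W] {M : CoxeterMatrix B} (cs : CoxeterSystem M W)

local prefix:100 "s" => cs.simple
local prefix:100 "π" => cs.wordProd
local prefix:100 "ℓ" => cs.length
local prefix:100 "ris" => cs.rightInvSeq

/-- The permutation of `W × ZMod 2` associated to a simple reflection. -/
noncomputable def eta (i : B) : Equiv.Perm (W × ZMod 2) :=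
  Function.Involutive.toPerm
    (fun x => (s i * x.1 * s i, x.2 + if x.1 = s i then 1 else 0))
    (by
      rintro ⟨t, ε⟩
      simp only [Prod.mk.injEq]
      constructor
      · rw [← mul_assoc, ← mul_assoc, mul_assoc (s i * s i)]
        simp [cs.simple_mul_simple_self]
      · have h : (s i * t * s i = s i) ↔ (t = s i) := by
          rw [muleq_iff, cs.inv_simple]
          simp [cs.simple_mul_simple_self, ← mul_assoc]
        simp only [h, add_assoc]
        rcases eq_or_ne t (s i) with h' | h'
        · simp [h', CharTwo.add_self_eq_zero]
        · simp [h'])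

theorem eta_apply (i : B) (t : W) (ε : ZMod 2) :
    eta cs i (t, ε) = (s i * t * s i, ε + if t = s i then 1 else 0) := rfl

theorem eta_pow_apply (i j : B) (k : ℕ) (t : W) (ε : ZMod 2) :
    ((eta cs i * eta cs j) ^ k) (t, ε) =
      (((s j * s i)⁻¹) ^ k * t * (s j * s i) ^ k,
        ε + ∑ q ∈ Finset.range (2 * k),
          if t = (s j * s i) ^ q * s j then 1 else 0) := by
  have ha : s i * s i = 1 := cs.simple_mul_simple_self i
  have hb : s j * s j = 1 := cs.simple_mul_simple_self j
  induction k generalizing ε with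
  | zero => simp
  | succ k ih =>
    rw [pow_succ', Equiv.Perm.mul_apply, Equiv.Perm.mul_apply, ih, eta_apply, eta_apply]
    simp only [Prod.mk.injEq]
    rw [show 2 * (k + 1) = 2 * k + 1 + 1  by ring, Finset.sum_range_succ, Finset.sum_range_succ]
    constructor
    · rw [pow_succ' ((s j * s i)⁻¹), pow_succ (s j * s i), mul_inv_rev,
        cs.inv_simple, cs.inv_simple]
      group
    · simp only [iff1 ha hb k t, iff2 ha hb k t]
      ring

theorem eta_liftable : M.IsLiftable (fun i => eta cs i) := by
  intro i j
  apply Equiv.ext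
  rintro ⟨t, ε⟩
  show ((eta cs i * eta cs j) ^ M i j) (t, ε) = (t, ε)
  rw [eta_pow_apply]
  have hm : (s j * s i) ^ (M i j) = 1 := cs.simple_mul_simple_pow' i j
  have h1 : ((s j * s i)⁻¹) ^ (M i j) * t * (s j * s i) ^ (M i j) = t := by
    rw [inv_pow, hm]; simp
  have h2 : ∑ q ∈ Finset.range (2 * M i j),
      (if t = (s j * s i) ^ q * s j then (1 : ZMod 2) else 0) = 0 := by
    rw [two_mul, Finset.sum_range_add]
    have he : ∀ q : ℕ, ((if t = (s j * s i) ^ (M i j + q) * s j then (1 : ZMod 2) else 0))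
        = (if t = (s j * s i) ^ q * s j then (1 : ZMod 2) else 0) := by
      intro q; rw [pow_add, hm, one_mul]
    rw [Finset.sum_congr rfl (fun q _ => he q)]
    exact CharTwo.add_self_eq_zero _
  rw [h1, h2, add_zero]

/-- The homomorphism from `W` to permutations of `W × ZMod 2`. -/
noncomputable def phi : W →* Equiv.Perm (W × ZMod 2) := cs.lift ⟨fun i => eta cs i, eta_liftable cs⟩

theorem phi_simple (i : B) : phi cs (s i) = eta cs i :=
  cs.lift_apply_simple (eta_liftable cs) i

theorem phi_wordProd (ω : List B) (t : W) (ε : ZMod 2) :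
    phi cs (π ω) (t, ε) =
      (π ω * t * (π ω)⁻¹, ε + countZ (ris ω) t) := by
  induction ω generalizing ε with
  | nil => simp
  | cons i ω ih =>
    rw [cs.wordProd_cons, map_mul, Equiv.Perm.mul_apply, ih, phi_simple, eta_apply]
    have hcount : countZ (cs.rightInvSeq (i :: ω)) t
        = (if ((π ω)⁻¹ * (s i) * (π ω)) = t then 1 else 0) + countZ (ris ω) t := by
      show countZ ((((π ω)⁻¹ * (s i) * (π ω)) :: (ris ω))) t = _
      rw [countZ_cons]
    simp only [Prod.mk.injEq]
    constructor
    · rw [mul_inv_rev, cs.inv_simple]; group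
    · rw [hcount]
      have hiff : (π ω * t * (π ω)⁻¹ = s i) ↔ ((π ω)⁻¹ * s i * π ω = t) := by
        rw [muleq_iff]
        constructor
        · intro h; rw [h]; group
        · intro h; rw [← h]; group
      simp only [hiff]
      ring

theorem countZ_rightInvSeq_eq {ω ω' : List B} (h : π ω = π ω') (t : W) :
    countZ (ris ω) t = countZ (ris ω') t := by
  have h1 := phi_wordProd cs ω t 0
  have h2 := phi_wordProd cs ω' t 0
  rw [h] at h1
  rw [h1] at h2
  have := congrArg Prod.snd h2
  simpa using this


theorem rightInvSeq_cons (i : B) (ω : List B) :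
    ris (i :: ω) = ((π ω)⁻¹ * (s i) * (π ω)) :: ris ω := rfl

theorem rightInvSeq_append (α β : List B) :
    ris (α ++ β) = (ris α).map (fun x => (π β)⁻¹ * x * (π β)) ++ ris β := by
  induction α with
  | nil => simp
  | cons i α ih =>
    rw [List.cons_append, rightInvSeq_cons, rightInvSeq_cons, ih, List.map_cons,
      List.cons_append]
    congr 1
    rw [cs.wordProd_append, mul_inv_rev]
    group

theorem leftInvSeq_eq_map (ω : List B) :
    cs.leftInvSeq ω = (ris ω).map (fun x => π ω * x * (π ω)⁻¹) := by
  induction ω with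
  | nil => simp
  | cons i ω ih =>
    show (s i) :: List.map (MulAut.conj (s i)) (cs.leftInvSeq ω) = _
    rw [rightInvSeq_cons, List.map_cons, ih, List.map_map]
    congr 1
    · rw [cs.wordProd_cons, mul_inv_rev, cs.inv_simple]
      group
      rw [cs.simple_mul_simple_self, one_mul]
    · apply List.map_congr_left
      intro x _
      show s i * (π ω * x * (π ω)⁻¹) * (s i)⁻¹ = π (i :: ω) * x * (π (i :: ω))⁻¹
      rw [cs.wordProd_cons, mul_inv_rev, cs.inv_simple]
      group

/-- Strong exchange property: if `t` is a reflection with `ℓ(π ω * t) < ℓ(π ω)`,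
then `t` appears in the right inversion sequence of `ω`. -/
theorem mem_rightInvSeq_of_lt (ω : List B) {t : W} (hrefl : cs.IsReflection t)
    (hlt : ℓ ((π ω) * t) < ℓ (π ω)) : t ∈ ris ω := by
  have htt : t * t = 1 := hrefl.mul_self
  have htinv : t⁻¹ = t := hrefl.inv
  obtain ⟨y, i, ht⟩ := hrefl
  obtain ⟨ρ, hρred, hρ⟩ := cs.exists_reduced_word' y
  obtain ⟨σ, hσred, hσ⟩ := cs.exists_reduced_word' ((π ω) * t)
  set ρt : List B := (ρ ++ [i]) ++ ρ.reverse with hρt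
  have hπρt : π ρt = t := by
    rw [hρt, cs.wordProd_append, cs.wordProd_append, cs.wordProd_reverse,
      cs.wordProd_singleton, ht, ← hρ]
  have hprod : π (σ ++ ρt) = π ω := by
    rw [cs.wordProd_append, hπρt, ← hσ, mul_assoc, htt, mul_one]
  have hcount := countZ_rightInvSeq_eq cs hprod.symm t
  -- compute countZ (ris (σ ++ ρt)) t
  have h1 : countZ ((ris σ).map (fun x => (π ρt)⁻¹ * x * (π ρt))) t
      = countZ (ris σ) t := by
    apply countZ_map
    intro x
    rw [hπρt, muleq_iff, inv_inv, htinv, htt, one_mul]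
  have h2 : countZ (ris σ) t = 0 := by
    apply countZ_eq_zero_of_not_mem
    intro hmem
    have := (cs.isRightInversion_of_mem_rightInvSeq hσred hmem).2
    rw [← hσ, mul_assoc, htt, mul_one] at this
    omega
  -- compute countZ (ris ρt) t = 1
  have h3 : countZ (ris ρt) t = 1 := by
    rw [hρt, rightInvSeq_append, rightInvSeq_append, cs.rightInvSeq_singleton,
      List.map_append, countZ_append, countZ_append]
    have e1 : countZ ((List.map (fun x => (π [i])⁻¹ * x * π [i]) (ris ρ)).map
        (fun x => (π ρ.reverse)⁻¹ * x * π ρ.reverse)) t = countZ (ris ρ) (s i) := by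
      rw [List.map_map]
      apply countZ_map
      intro x
      simp only [Function.comp_apply]
      rw [cs.wordProd_reverse, cs.wordProd_singleton, cs.inv_simple, ← hρ]
      rw [muleq_iff'']
      have hv : (s i)⁻¹ * (y⁻¹⁻¹)⁻¹ * t * (y⁻¹)⁻¹ * (s i)⁻¹ = s i := by
        have h' : (s i)⁻¹ * (y⁻¹⁻¹)⁻¹ * t * (y⁻¹)⁻¹ * (s i)⁻¹ = (s i)⁻¹ := by
          rw [ht]; group
        rw [h', cs.inv_simple]
      rw [hv]
    have e2 : countZ ((List.map (fun x => (π ρ.reverse)⁻¹ * x * π ρ.reverse)) [s i]) t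
        = 1 := by
      have hc : (π ρ.reverse)⁻¹ * (s i) * π ρ.reverse = t := by
        rw [cs.wordProd_reverse, ← hρ, ht]
        group
      rw [List.map_singleton, countZ_cons, if_pos hc, countZ_nil, add_zero]
    have e3 : countZ (ris ρ.reverse) t = countZ (ris ρ) (s i) := by
      rw [cs.rightInvSeq_reverse, countZ_reverse, leftInvSeq_eq_map]
      apply countZ_map
      intro x
      rw [← hρ, muleq_iff]
      have hv2 : y⁻¹ * t * y⁻¹⁻¹ = s i := by
        rw [ht]
        group
      rw [hv2]
    rw [e1, e2, e3]
    rw [show countZ (ris ρ) (s i) + 1 + countZ (ris ρ) (s i)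
          = (countZ (ris ρ) (s i) + countZ (ris ρ) (s i)) + 1  by ring,
      CharTwo.add_self_eq_zero, zero_add]
  apply mem_of_countZ_ne_zero
  rw [hcount, rightInvSeq_append, countZ_append, h1, h2, h3, zero_add]
  exact one_ne_zero

/-- Exchange: deleting a letter. -/
theorem exists_eraseIdx_of_lt (ω : List B) {t : W} (hrefl : cs.IsReflection t)
    (hlt : ℓ ((π ω) * t) < ℓ (π ω)) :
    ∃ k, k < ω.length ∧ (π ω) * t = π (ω.eraseIdx k) := by
  have hmem := mem_rightInvSeq_of_lt cs ω hrefl hlt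
  obtain ⟨k, hk, hget⟩ := List.getElem_of_mem hmem
  rw [cs.length_rightInvSeq] at hk
  refine ⟨k, hk, ?_⟩
  rw [← cs.wordProd_mul_getD_rightInvSeq ω k]
  congr 1
  rw [List.getD_eq_getElem _ _ (by rw [cs.length_rightInvSeq]; exact hk)]
  exact hget.symm

theorem wordProd_take_succ (ω : List B) (k : ℕ) (hk : k < ω.length) :
    π (ω.take (k+1)) = π (ω.take k) * s (ω.get ⟨k, hk⟩) := by
  rw [List.take_succ, cs.wordProd_append]
  congr 1
  rw [List.getElem?_eq_getElem hk]
  simp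

theorem length_take_eq (ω : List B) (k : ℕ) (hk : k ≤ ω.length)
    (h : ∀ m, m < k → ℓ (π (ω.take m)) < ℓ (π (ω.take (m+1)))) :
    ℓ (π (ω.take k)) = k := by
  induction k with
  | zero => simp
  | succ k ih =>
    have hlk : ℓ (π (ω.take k)) = k := ih (by omega) (fun m hm => h m (by omega))
    have hup := h k (lt_add_one k)
    have hk' : k < ω.length := by omega
    rw [wordProd_take_succ cs ω k hk'] at hup ⊢
    rcases cs.length_mul_simple (π (ω.take k)) (ω.get ⟨k, hk'⟩) with h' | h' <;> omega

theorem deletion_step (ω : List B) (hnred : ¬ cs.IsReduced ω) :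
    ∃ ω', ω'.Sublist ω ∧ ω'.length + 2 = ω.length ∧ π ω' = π ω := by
  have hex : ∃ k, k < ω.length ∧ ℓ (π (ω.take (k+1))) < ℓ (π (ω.take k)) := by
    by_contra h
    push_neg at h
    apply hnred
    have hmono : ∀ m, m < ω.length → ℓ (π (ω.take m)) < ℓ (π (ω.take (m+1))) := by
      intro m hm
      have h1 := h m hm
      have hne := cs.length_mul_simple_ne (π (ω.take m)) (ω.get ⟨m, hm⟩)
      rw [wordProd_take_succ cs ω m hm] at h1 ⊢
      omega
    have := length_take_eq cs ω ω.length le_rfl hmono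
    rw [List.take_length] at this
    exact this
  obtain ⟨hk1, hk2⟩ := Nat.find_spec hex
  set k := Nat.find hex with hkdef
  have hmin : ∀ m, m < k → ¬ (m < ω.length ∧ ℓ (π (ω.take (m+1))) < ℓ (π (ω.take m))) :=
    fun m hm => Nat.find_min hex hm
  have htakered : cs.IsReduced (ω.take k) := by
    have hlen : ℓ (π (ω.take k)) = k := by
      apply length_take_eq cs ω k hk1.le
      intro m hm
      have h1 := hmin m hm
      have hne := cs.length_mul_simple_ne (π (ω.take m)) (ω.get ⟨m, by omega⟩)
      rw [wordProd_take_succ cs ω m (by omega)] at h1 ⊢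
      simp only [not_and, not_lt] at h1
      have := h1 (by omega)
      omega
    unfold CoxeterSystem.IsReduced
    rw [hlen, List.length_take, min_eq_left hk1.le]
  have hdown : ℓ (π (ω.take k) * s (ω.get ⟨k, hk1⟩)) < ℓ (π (ω.take k)) := by
    rw [← wordProd_take_succ cs ω k hk1]
    exact hk2
  obtain ⟨q, hq, heq⟩ := exists_eraseIdx_of_lt cs (ω.take k)
    (cs.isReflection_simple (ω.get ⟨k, hk1⟩)) hdown
  refine ⟨(ω.take k).eraseIdx q ++ ω.drop (k+1), ?_, ?_, ?_⟩
  · have h1 : ((ω.take k).eraseIdx q).Sublist (ω.take k) := List.eraseIdx_sublist _ q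
    have h2 : (ω.drop (k+1)).Sublist (ω.drop k) := by
      rw [List.drop_eq_getElem_cons hk1]
      exact List.sublist_cons_self _ _
    have := List.Sublist.append h1 h2
    rwa [List.take_append_drop] at this
  · rw [List.length_append, List.length_eraseIdx, if_pos hq, List.length_drop]
    simp only [List.length_take] at hq ⊢
    omega
  · rw [cs.wordProd_append, ← heq, ← wordProd_take_succ cs ω k hk1,
      ← cs.wordProd_append, List.take_append_drop]

theorem exists_reduced_sublist (ω : List B) :
    ∃ τ, τ.Sublist ω ∧ cs.IsReduced τ ∧ π τ = π ω := by
  generalize hn : ω.length = n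
  induction n using Nat.strong_induction_on generalizing ω with
  | _ n ih =>
    by_cases hred : cs.IsReduced ω
    · exact ⟨ω, List.Sublist.refl ω, hred, rfl⟩
    · obtain ⟨ω', hsub, hlen, hprod⟩ := deletion_step cs ω hred
      obtain ⟨τ, h1, h2, h3⟩ := ih ω'.length (by omega) ω' rfl
      exact ⟨τ, h1.trans hsub, h2, h3.trans hprod⟩

/-- A single step in the Bruhat order. -/
def bruhatStep (v w : W) : Prop :=
  ∃ t, cs.IsReflection t ∧ w = v * t ∧ ℓ v < ℓ w

/-- The Bruhat order as chains of reflections. -/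
def BLE (v w : W) : Prop := Relation.ReflTransGen (bruhatStep cs) v w

theorem BLE.refl (v : W) : BLE cs v v := Relation.ReflTransGen.refl

theorem BLE.trans {u v w : W} (h1 : BLE cs u v) (h2 : BLE cs v w) : BLE cs u w :=
  Relation.ReflTransGen.trans h1 h2

theorem bruhatStep_simple_right {x : W} {i : B} (h : ℓ x < ℓ (x * s i)) :
    bruhatStep cs x (x * s i) := ⟨s i, cs.isReflection_simple i, rfl, h⟩

theorem bruhatStep_simple_left {x : W} {i : B} (h : ℓ (x * s i) < ℓ x) :
    bruhatStep cs (x * s i) x :=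
  ⟨s i, cs.isReflection_simple i, (cs.simple_mul_simple_cancel_right i).symm, h⟩

/-- Chain order implies every reduced word contains a reduced subword. -/
theorem exists_sublist_of_BLE {v w : W} (h : BLE cs v w) :
    ∀ ω : List B, cs.IsReduced ω → π ω = w →
      ∃ τ, τ.Sublist ω ∧ cs.IsReduced τ ∧ π τ = v := by
  induction h with
  | refl =>
    intro ω hred hπ
    exact ⟨ω, List.Sublist.refl ω, hred, hπ⟩
  | @tail u' w' hless hstep ih =>
    intro ω hred hπ
    obtain ⟨t, hrefl, hw, hlt⟩ := hstep
    have hu : π ω * t = u' := by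
      rw [hπ, hw, mul_assoc, hrefl.mul_self, mul_one]
    have hlt' : ℓ (π ω * t) < ℓ (π ω) := by rw [hu, hπ]; exact hlt
    obtain ⟨q, hq, heq⟩ := exists_eraseIdx_of_lt cs ω hrefl hlt'
    obtain ⟨τ', hsub', hred', hπ'⟩ := exists_reduced_sublist cs (ω.eraseIdx q)
    obtain ⟨τ, hsub, hredτ, hπτ⟩ := ih τ' hred' (by rw [hπ', ← heq, hu])
    exact ⟨τ, (hsub.trans hsub').trans (List.eraseIdx_sublist ω q), hredτ, hπτ⟩

theorem sublist_single {α : Type*} {τ : List α} {i : α} (h : τ.Sublist [i]) :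
    τ = [] ∨ τ = [i] := by
  cases h with
  | cons _ h' => exact Or.inl (List.sublist_nil.mp h')
  | cons_cons _ h' => exact Or.inr (by rw [List.sublist_nil.mp h'])

/-- min of `x` and `x * s i` in Bruhat order. -/
noncomputable def mn (x : W) (i : B) : W := if ℓ (x * s i) < ℓ x then x * s i else x

/-- max of `x` and `x * s i` in Bruhat order. -/
noncomputable def mx (x : W) (i : B) : W := if ℓ x < ℓ (x * s i) then x * s i else x

theorem mn_pos {x : W} {i : B} (h : ℓ (x * s i) < ℓ x) : mn cs x i = x * s i := if_pos h
theorem mn_neg {x : W} {i : B} (h : ¬ ℓ (x * s i) < ℓ x) : mn cs x i = x := if_neg h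
theorem mx_pos {x : W} {i : B} (h : ℓ x < ℓ (x * s i)) : mx cs x i = x * s i := if_pos h
theorem mx_neg {x : W} {i : B} (h : ¬ ℓ x < ℓ (x * s i)) : mx cs x i = x := if_neg h

theorem subword_imp_BLE_aux : ∀ n : ℕ,
    ∀ ω : List B, ω.length ≤ n → cs.IsReduced ω → ∀ τ : List B, τ.Sublist ω →
      cs.IsReduced τ → BLE cs (π τ) (π ω) := by
  intro n
  induction n with
  | zero =>
    intro ω hlen _ τ hsub _
    have hω : ω = [] := List.length_eq_zero_iff.mp (Nat.le_zero.mp hlen)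
    subst hω
    rw [List.sublist_nil.mp hsub]
    exact BLE.refl cs _
  | succ n ihS =>
    -- Lifting for covering steps
    have Zcover : ∀ u w : W, bruhatStep cs u w → ℓ w ≤ n → ∀ i : B,
        BLE cs (mn cs u i) (mn cs w i) ∧ BLE cs (mx cs u i) (mx cs w i) := by
      intro u w hstep hwn i
      have hne_u := cs.length_mul_simple_ne u i
      have hne_w := cs.length_mul_simple_ne w i
      have hdich_u := cs.length_mul_simple u i
      have hdich_w := cs.length_mul_simple w i
      have hsingle : BLE cs u w := Relation.ReflTransGen.single hstep
      obtain ⟨t0, hrefl0, hw0, hlt0⟩ := hstep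
      -- a common construction when ℓ (w * s i) < ℓ w :
      have hard : ℓ (w * s i) < ℓ w →
          (∃ τ₁ : List B, cs.IsReduced τ₁ ∧ π τ₁ = u * s i ∧ τ₁.length + 1 = ℓ u ∧
            BLE cs (u * s i) (w * s i))
          ∨ (BLE cs u (w * s i) ∧ BLE cs (u * s i) w) := by
        intro hwi
        obtain ⟨ρ, hρred, hρ⟩ := cs.exists_reduced_word' (w * s i)
        have hρlen : ρ.length = ℓ (w * s i) := by
          have := hρred
          unfold CoxeterSystem.IsReduced at this
          rw [← hρ] at this
          omega
        have hπconc : π (ρ ++ [i]) = w := by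
          rw [cs.wordProd_append, cs.wordProd_singleton, ← hρ,
            cs.simple_mul_simple_cancel_right]
        have hconcred : cs.IsReduced (ρ ++ [i]) := by
          unfold CoxeterSystem.IsReduced
          rw [hπconc, List.length_append, List.length_singleton, hρlen]
          omega
        have hconclen : (ρ ++ [i]).length ≤ n := by
          rw [List.length_append, List.length_singleton, hρlen]
          omega
        obtain ⟨τ, hτsub, hτred, hτπ⟩ :=
          exists_sublist_of_BLE cs hsingle (ρ ++ [i]) hconcred hπconc
        rw [List.sublist_append_iff] at hτsub
        obtain ⟨τ₁, τ₂, rfl, hτ₁, hτ₂⟩ := hτsub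
        have hτ₁red : cs.IsReduced τ₁ := by
          have := CoxeterSystem.IsReduced.take hτred τ₁.length
          rwa [List.take_left] at this
        rcases sublist_single hτ₂ with rfl | rfl
        · -- τ₂ = [] : π τ₁ = u
          rw [List.append_nil] at hτπ
          right
          have h1 : BLE cs u (w * s i) := by
            have := ihS ρ (by omega) hρred τ₁ hτ₁ hτ₁red
            rwa [hτπ, ← hρ] at this
          constructor
          · exact h1
          · -- u * s i ≤ w  via τ₁ ++ [i]  if it is reduced, else via u * s i < u ≤ w * s i ≤ w?
            by_cases hu : ℓ (u * s i) < ℓ u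
            · exact Relation.ReflTransGen.head (bruhatStep_simple_left cs hu)
                (Relation.ReflTransGen.trans h1
                  (Relation.ReflTransGen.single (bruhatStep_simple_left cs hwi)))
            · have hπτi : π (τ₁ ++ [i]) = u * s i := by
                rw [cs.wordProd_append, cs.wordProd_singleton, hτπ]
              have hτl : τ₁.length = ℓ u := by
                have := hτ₁red
                unfold CoxeterSystem.IsReduced at this
                rw [hτπ] at this
                omega
              have hredτi : cs.IsReduced (τ₁ ++ [i]) := by
                unfold CoxeterSystem.IsReduced
                rw [hπτi, List.length_append, List.length_singleton, hτl]
                omega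
              have := ihS (ρ ++ [i]) hconclen hconcred (τ₁ ++ [i])
                (List.Sublist.append hτ₁ (List.Sublist.refl [i])) hredτi
              rwa [hπτi, hπconc] at this
        · -- τ₂ = [i] : π τ₁ = u * s i
          left
          have hπτ₁ : π τ₁ = u * s i := by
            rw [cs.wordProd_append, cs.wordProd_singleton] at hτπ
            rw [← hτπ, cs.simple_mul_simple_cancel_right]
          have hlu : τ₁.length + 1 = ℓ u := by
            have := hτred
            unfold CoxeterSystem.IsReduced at this
            rw [hτπ, List.length_append, List.length_singleton] at this
            omega
          refine ⟨τ₁, hτ₁red, hπτ₁, hlu, ?_⟩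
          have := ihS ρ (by omega) hρred τ₁ hτ₁ hτ₁red
          rwa [hπτ₁, ← hρ] at this
      by_cases hu : ℓ (u * s i) < ℓ u <;> by_cases hwi : ℓ (w * s i) < ℓ w
      · -- both down
        rw [mn_pos cs hu, mn_pos cs hwi, mx_neg cs (by omega), mx_neg cs (by omega)]
        refine ⟨?_, hsingle⟩
        rcases hard hwi with ⟨τ₁, _, hπτ₁, _, hble⟩ | ⟨h1, _⟩
        · exact hble
        · exact Relation.ReflTransGen.head (bruhatStep_simple_left cs hu) h1
      · -- u down, w up
        rw [mn_pos cs hu, mn_neg cs hwi, mx_neg cs (by omega), mx_pos cs (by omega)]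
        constructor
        · exact Relation.ReflTransGen.head (bruhatStep_simple_left cs hu) hsingle
        · exact Relation.ReflTransGen.tail hsingle (bruhatStep_simple_right cs (by omega))
      · -- u up, w down
        rw [mn_neg cs hu, mn_pos cs hwi, mx_pos cs (by omega), mx_neg cs (by omega)]
        rcases hard hwi with ⟨τ₁, hτ₁red, hπτ₁, hlu, hble⟩ | ⟨h1, h2⟩
        · exfalso
          have hl1 : ℓ (u * s i) = τ₁.length := by
            have := hτ₁red
            unfold CoxeterSystem.IsReduced at this
            rw [hπτ₁] at this
            omega
          omega
        · exact ⟨h1, h2⟩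
      · -- both up
        rw [mn_neg cs hu, mn_neg cs hwi, mx_pos cs (by omega), mx_pos cs (by omega)]
        refine ⟨hsingle, Relation.ReflTransGen.single ⟨s i * t0 * s i, ?_, ?_, by omega⟩⟩
        · have := hrefl0.conj (s i)
          rwa [cs.inv_simple] at this
        · rw [hw0, show u * s i * (s i * t0 * s i) = u * (s i * s i) * (t0 * s i)  by group,
            cs.simple_mul_simple_self, mul_one, ← mul_assoc]
    -- Lifting along chains
    have Zchain : ∀ v w : W, BLE cs v w → ℓ w ≤ n → ∀ i : B,
        BLE cs (mn cs v i) (mn cs w i) ∧ BLE cs (mx cs v i) (mx cs w i) := by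
      intro v w h
      induction h with
      | refl => exact fun _ i => ⟨BLE.refl cs _, BLE.refl cs _⟩
      | @tail u' w' hless hstep ih =>
        intro hwn i
        have hlt : ℓ u' < ℓ w' := by
          obtain ⟨t, _, _, hlt⟩ := hstep
          exact hlt
        obtain ⟨h1, h2⟩ := ih (by omega) i
        obtain ⟨g1, g2⟩ := Zcover u' w' hstep hwn i
        exact ⟨Relation.ReflTransGen.trans h1 g1, Relation.ReflTransGen.trans h2 g2⟩
    -- main statement at n+1
    intro ω hlen hred τ hsub hτred
    rcases List.eq_nil_or_concat ω with rfl | ⟨ω', i, rfl⟩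
    · rw [List.sublist_nil.mp hsub]
      exact BLE.refl cs _
    · rw [List.concat_eq_append] at hlen hred hsub ⊢
      have hω'red : cs.IsReduced ω' := by
        have := CoxeterSystem.IsReduced.take hred ω'.length
        rwa [List.take_left] at this
      have hω'len : ω'.length ≤ n := by
        rw [List.length_append, List.length_singleton] at hlen
        omega
      have hπω : π (ω' ++ [i]) = π ω' * s i := by
        rw [cs.wordProd_append, cs.wordProd_singleton]
      have hℓω' : ℓ (π ω') = ω'.length := hω'red
      have hℓω : ℓ (π ω' * s i) = ω'.length + 1 := by
        have := hred
        unfold CoxeterSystem.IsReduced at this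
        rw [hπω] at this
        rw [this, List.length_append, List.length_singleton]
      rw [List.sublist_append_iff] at hsub
      obtain ⟨τ₁, τ₂, rfl, hτ₁, hτ₂⟩ := hsub
      have hτ₁red : cs.IsReduced τ₁ := by
        have := CoxeterSystem.IsReduced.take hτred τ₁.length
        rwa [List.take_left] at this
      have h1 : BLE cs (π τ₁) (π ω') := ihS ω' hω'len hω'red τ₁ hτ₁ hτ₁red
      rcases sublist_single hτ₂ with rfl | rfl
      · rw [List.append_nil]
        refine Relation.ReflTransGen.tail h1 ?_
        rw [hπω]
        apply bruhatStep_simple_right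
        omega
      · have hπτ : π (τ₁ ++ [i]) = π τ₁ * s i := by
          rw [cs.wordProd_append, cs.wordProd_singleton]
        have hℓτ₁ : ℓ (π τ₁) = τ₁.length := hτ₁red
        have hℓτ : ℓ (π τ₁ * s i) = τ₁.length + 1 := by
          have := hτred
          unfold CoxeterSystem.IsReduced at this
          rw [hπτ] at this
          rw [this, List.length_append, List.length_singleton]
        have h2 := (Zchain (π τ₁) (π ω') h1 (by omega) i).2
        rw [mx_pos cs (by omega), mx_pos cs (by omega)] at h2
        rw [hπτ, hπω]
        exact h2

/-- Subword (of a reduced word) implies Bruhat chain order. -/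
theorem BLE_of_sublist {ω τ : List B} (hred : cs.IsReduced ω) (hsub : τ.Sublist ω)
    (hτred : cs.IsReduced τ) : BLE cs (π τ) (π ω) :=
  subword_imp_BLE_aux cs ω.length ω le_rfl hred τ hsub hτred

/-- A positive distinguished subexpression, as a list of letters. -/
def PDS (ω : List B) (v : W) (L : List W) : Prop :=
  L.length = ω.length ∧
  (∀ k, (hk : k < ω.length) → L.getD k 1 = 1 ∨ L.getD k 1 = s (ω.get ⟨k, hk⟩)) ∧
  L.prod = v ∧
  ∀ k, (hk : k < ω.length) →
    ℓ ((L.take k).prod) < ℓ ((L.take k).prod * s (ω.get ⟨k, hk⟩))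

theorem PDS_concat {ω' : List B} {i : B} {v v' : W} {L' : List W} {x : W}
    (hP : PDS cs ω' v' L') (hx : x = 1 ∨ x = s i) (hprod : v' * x = v)
    (hlast : ℓ v' < ℓ (v' * s i)) : PDS cs (ω' ++ [i]) v (L' ++ [x]) := by
  obtain ⟨hlen, hent, hLprod, htake⟩ := hP
  refine ⟨?_, ?_, ?_, ?_⟩
  · simp [hlen]
  · intro k hk
    rw [List.length_append, List.length_singleton] at hk
    by_cases hkl : k < ω'.length
    · rw [List.getD_append _ _ _ _ (by omega)]
      have hget : (ω' ++ [i]).get ⟨k, by simp; omega⟩ = ω'.get ⟨k, hkl⟩ := by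
        simp only [List.get_eq_getElem]
        exact List.getElem_append_left (by assumption)
      rw [hget]
      exact hent k hkl
    · have hkeq : k = ω'.length := by omega
      subst hkeq
      rw [List.getD_append_right _ _ _ _ (by omega), hlen, Nat.sub_self,
        List.getD_cons_zero]
      have hget : (ω' ++ [i]).get ⟨ω'.length, by simp⟩ = i := by
        simp [List.get_eq_getElem, List.getElem_concat_length]
      rw [hget]
      rcases hx with rfl | rfl
      · exact Or.inl rfl
      · exact Or.inr rfl
  · rw [List.prod_append, List.prod_singleton, hLprod, hprod]
  · intro k hk
    rw [List.length_append, List.length_singleton] at hk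
    by_cases hkl : k < ω'.length
    · rw [List.take_append_of_le_length (by omega)]
      have hget : (ω' ++ [i]).get ⟨k, by simp; omega⟩ = ω'.get ⟨k, hkl⟩ := by
        simp only [List.get_eq_getElem]
        exact List.getElem_append_left (by assumption)
      rw [hget]
      exact htake k hkl
    · have hkeq : k = ω'.length := by omega
      subst hkeq
      have htk : (L' ++ [x]).take ω'.length = L' := by
        rw [← hlen, List.take_left]
      have hget : (ω' ++ [i]).get ⟨ω'.length, by simp⟩ = i := by
        simp [List.get_eq_getElem, List.getElem_concat_length]
      rw [htk, hget, hLprod]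
      exact hlast

theorem PDS_concat_elim {ω' : List B} {i : B} {v : W} {K : List W} {x : W}
    (h : PDS cs (ω' ++ [i]) v (K ++ [x])) :
    (x = 1 ∨ x = s i) ∧ K.prod * x = v ∧ ℓ (K.prod) < ℓ (K.prod * s i) ∧
      PDS cs ω' (K.prod) K := by
  obtain ⟨hlen, hent, hprod, htake⟩ := h
  simp only [List.length_append, List.length_singleton] at hlen
  have hKlen : K.length = ω'.length := by omega
  have hget : (ω' ++ [i]).get ⟨ω'.length, by simp⟩ = i := by
    simp [List.get_eq_getElem, List.getElem_concat_length]
  have hD : (K ++ [x]).getD ω'.length 1 = x := by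
    rw [List.getD_append_right _ _ _ _ (by omega), hKlen, Nat.sub_self,
      List.getD_cons_zero]
  have htk : (K ++ [x]).take ω'.length = K := by
    rw [← hKlen, List.take_left]
  refine ⟨?_, ?_, ?_, ?_, ?_, ?_⟩
  · have := hent ω'.length (by simp)
    rw [hD, hget] at this
    exact this
  · rw [← hprod, List.prod_append, List.prod_singleton]
  · have := htake ω'.length (by simp)
    rwa [htk, hget] at this
  · exact hKlen
  · intro k hk
    have := hent k (by simp; omega)
    rw [List.getD_append _ _ _ _ (by omega)] at this
    have hg : (ω' ++ [i]).get ⟨k, by simp; omega⟩ = ω'.get ⟨k, hk⟩ := by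
      simp only [List.get_eq_getElem]
      exact List.getElem_append_left (by assumption)
    rwa [hg] at this
  · exact ⟨rfl, by
      intro k hk
      have := htake k (by simp; omega)
      rw [List.take_append_of_le_length (by omega)] at this
      have hg : (ω' ++ [i]).get ⟨k, by simp; omega⟩ = ω'.get ⟨k, hk⟩ := by
        simp only [List.get_eq_getElem]
        exact List.getElem_append_left (by assumption)
      rwa [hg] at this⟩

theorem PDS_exists (ω : List B) : cs.IsReduced ω → ∀ v : W,
    (∃ τ, τ.Sublist ω ∧ cs.IsReduced τ ∧ π τ = v) → ∃ L, PDS cs ω v L := by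
  induction ω using List.reverseRecOn with
  | nil =>
    intro _ v hex
    obtain ⟨τ, hsub, _, hπ⟩ := hex
    rw [List.sublist_nil.mp hsub] at hπ
    refine ⟨[], rfl, ?_, ?_, ?_⟩
    · intro k hk; exact absurd hk (by simp)
    · rw [List.prod_nil, ← hπ, cs.wordProd_nil]
    · intro k hk; exact absurd hk (by simp)
  | append_singleton ω' i ih =>
    intro hred v hex
    have hω'red : cs.IsReduced ω' := by
      have := CoxeterSystem.IsReduced.take hred ω'.length
      rwa [List.take_left] at this
    have hdv := cs.length_mul_simple v i
    have hnv := cs.length_mul_simple_ne v i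
    by_cases hv : ℓ (v * s i) < ℓ v
    · have hex' : ∃ τ', τ'.Sublist ω' ∧ cs.IsReduced τ' ∧ π τ' = v * s i := by
        obtain ⟨τ, hsub, hτred, hπ⟩ := hex
        rw [List.sublist_append_iff] at hsub
        obtain ⟨τ₁, τ₂, rfl, hτ₁, hτ₂⟩ := hsub
        have hτ₁red : cs.IsReduced τ₁ := by
          have := CoxeterSystem.IsReduced.take hτred τ₁.length
          rwa [List.take_left] at this
        rcases sublist_single hτ₂ with rfl | rfl
        · rw [List.append_nil] at hπ hτred
          obtain ⟨q, hq, heq⟩ := exists_eraseIdx_of_lt cs τ₁ (cs.isReflection_simple i)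
            (by rw [hπ]; exact hv)
          refine ⟨τ₁.eraseIdx q, (List.eraseIdx_sublist τ₁ q).trans hτ₁, ?_, by rw [← heq, hπ]⟩
          unfold CoxeterSystem.IsReduced
          rw [← heq, hπ, List.length_eraseIdx, if_pos hq]
          have hτl : ℓ v = τ₁.length := by
            have := hτred
            unfold CoxeterSystem.IsReduced at this
            rw [hπ] at this
            omega
          omega
        · have hπ₁ : π τ₁ = v * s i := by
            rw [cs.wordProd_append, cs.wordProd_singleton] at hπ
            rw [← hπ, cs.simple_mul_simple_cancel_right]
          exact ⟨τ₁, hτ₁, hτ₁red, hπ₁⟩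
      obtain ⟨L', hL'⟩ := ih hω'red (v * s i) hex'
      exact ⟨L' ++ [s i], PDS_concat cs hL' (Or.inr rfl)
        (cs.simple_mul_simple_cancel_right i)
        (by rw [cs.simple_mul_simple_cancel_right]; exact hv)⟩
    · have hex' : ∃ τ', τ'.Sublist ω' ∧ cs.IsReduced τ' ∧ π τ' = v := by
        obtain ⟨τ, hsub, hτred, hπ⟩ := hex
        rw [List.sublist_append_iff] at hsub
        obtain ⟨τ₁, τ₂, rfl, hτ₁, hτ₂⟩ := hsub
        have hτ₁red : cs.IsReduced τ₁ := by
          have := CoxeterSystem.IsReduced.take hτred τ₁.length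
          rwa [List.take_left] at this
        rcases sublist_single hτ₂ with rfl | rfl
        · rw [List.append_nil] at hπ
          exact ⟨τ₁, hτ₁, hτ₁red, hπ⟩
        · exfalso
          have hπ₁ : π τ₁ = v * s i := by
            rw [cs.wordProd_append, cs.wordProd_singleton] at hπ
            rw [← hπ, cs.simple_mul_simple_cancel_right]
          have h1 : ℓ (v * s i) = τ₁.length := by
            have := hτ₁red
            unfold CoxeterSystem.IsReduced at this
            rw [hπ₁] at this
            omega
          have h2 : ℓ v = τ₁.length + 1 := by
            have := hτred
            unfold CoxeterSystem.IsReduced at this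
            rw [hπ, List.length_append, List.length_singleton] at this
            omega
          omega
      obtain ⟨L', hL'⟩ := ih hω'red v hex'
      exact ⟨L' ++ [1], PDS_concat cs hL' (Or.inl rfl) (mul_one v) (by omega)⟩

theorem PDS_unique (ω : List B) : ∀ (v : W) (L₁ L₂ : List W),
    PDS cs ω v L₁ → PDS cs ω v L₂ → L₁ = L₂ := by
  induction ω using List.reverseRecOn with
  | nil =>
    intro v L₁ L₂ h₁ h₂
    rw [List.length_eq_zero_iff.mp h₁.1, List.length_eq_zero_iff.mp h₂.1]
  | append_singleton ω' i ih =>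
    intro v L₁ L₂ h₁ h₂
    have hconc : ∀ L : List W, PDS cs (ω' ++ [i]) v L → ∃ K x, L = K ++ [x] := by
      intro L hL
      rcases List.eq_nil_or_concat L with rfl | ⟨K, x, rfl⟩
      · exfalso
        have := hL.1
        simp at this
      · exact ⟨K, x, by rw [List.concat_eq_append]⟩
    obtain ⟨K₁, x₁, rfl⟩ := hconc L₁ h₁
    obtain ⟨K₂, x₂, rfl⟩ := hconc L₂ h₂
    have hdv := cs.length_mul_simple v i
    have hnv := cs.length_mul_simple_ne v i
    have det : ∀ (K : List W) (x : W), PDS cs (ω' ++ [i]) v (K ++ [x]) →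
        (ℓ (v * s i) < ℓ v → x = s i ∧ PDS cs ω' (v * s i) K) ∧
        (¬ ℓ (v * s i) < ℓ v → x = 1 ∧ PDS cs ω' v K) := by
      intro K x h
      obtain ⟨hx, hprod, hlast, hK⟩ := PDS_concat_elim cs h
      rcases hx with rfl | rfl
      · rw [mul_one] at hprod
        constructor
        · intro hlt
          exfalso
          rw [hprod] at hlast
          omega
        · intro _
          exact ⟨rfl, by rwa [hprod] at hK⟩
      · have hKp : K.prod = v * s i := by
          rw [← hprod, cs.simple_mul_simple_cancel_right]
        constructor
        · intro _
          exact ⟨rfl, by rwa [hKp] at hK⟩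
        · intro hnlt
          exfalso
          rw [hKp, cs.simple_mul_simple_cancel_right] at hlast
          omega
    by_cases hlt : ℓ (v * s i) < ℓ v
    · obtain ⟨hx₁, hK₁⟩ := (det K₁ x₁ h₁).1 hlt
      obtain ⟨hx₂, hK₂⟩ := (det K₂ x₂ h₂).1 hlt
      rw [ih _ K₁ K₂ hK₁ hK₂, hx₁, hx₂]
    · obtain ⟨hx₁, hK₁⟩ := (det K₁ x₁ h₁).2 hlt
      obtain ⟨hx₂, hK₂⟩ := (det K₂ x₂ h₂).2 hlt
      rw [ih _ K₁ K₂ hK₁ hK₂, hx₁, hx₂]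

end PDSAux

/-- Given `v ≤ w` in Bruhat order and a fixed reduced expression `ω` for `w`, there is a
unique positive distinguished subexpression for `v`: a unique choice of letters
`t j ∈ {1, s_{i_j}}` whose product is `v` and such that each partial product
`v_{(j-1)} = t_0 ⋯ t_{j-1}` satisfies `v_{(j-1)} < v_{(j-1)} s_{i_j}`, i.e. right
multiplication by `s_{i_j}` increases the length. -/
theorem exists_unique_positive_distinguished_subexpression
    {B W : Type*} [Group W] {M : CoxeterMatrix B} (cs : CoxeterSystem M W)
    (v : W) (ω : List B) (hred : cs.IsReduced ω)
    (hle : BruhatLE cs v (cs.wordProd ω)) :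
    ∃! t : Fin ω.length → W,
      (∀ j : Fin ω.length, t j = 1 ∨ t j = cs.simple (ω.get j)) ∧
      (List.ofFn t).prod = v ∧
      ∀ j : Fin ω.length,
        cs.length (((List.ofFn t).take (j : ℕ)).prod) <
          cs.length (((List.ofFn t).take (j : ℕ)).prod * cs.simple (ω.get j)) := by
  obtain ⟨ω₀, hω₀red, hπω₀, τ₀, hsub₀, hτ₀red, hπτ₀⟩ := hle
  have hBLE : PDSAux.BLE cs v (cs.wordProd ω) := by
    have := PDSAux.BLE_of_sublist cs hω₀red hsub₀ hτ₀red
    rwa [hπτ₀, hπω₀] at this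
  obtain ⟨τ, hτsub, hτred, hτπ⟩ := PDSAux.exists_sublist_of_BLE cs hBLE ω hred rfl
  obtain ⟨L, hL⟩ := PDSAux.PDS_exists cs ω hred v ⟨τ, hτsub, hτred, hτπ⟩
  obtain ⟨hLlen, hLent, hLprod, hLtake⟩ := hL
  have hofn : List.ofFn (fun j : Fin ω.length => L.getD (j : ℕ) 1) = L := by
    apply List.ext_getElem
    · rw [List.length_ofFn, hLlen]
    · intro k h1 h2
      rw [List.getElem_ofFn]
      exact List.getD_eq_getElem L 1 h2
  refine ⟨fun j => L.getD (j : ℕ) 1, ⟨?_, ?_, ?_⟩, ?_⟩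
  · intro j
    exact hLent j.1 j.2
  · rw [hofn]
    exact hLprod
  · intro j
    rw [hofn]
    exact hLtake j.1 j.2
  · intro t' ht'
    obtain ⟨h1', h2', h3'⟩ := ht'
    have hP' : PDSAux.PDS cs ω v (List.ofFn t') := by
      refine ⟨by rw [List.length_ofFn], ?_, h2', ?_⟩
      · intro k hk
        have hk' : k < (List.ofFn t').length := by
          rw [List.length_ofFn]
          exact hk
        rw [List.getD_eq_getElem _ _ hk', List.getElem_ofFn]
        exact h1' ⟨k, hk⟩
      · intro k hk
        exact h3' ⟨k, hk⟩
    have hLL := PDSAux.PDS_unique cs ω v (List.ofFn t') L hP' ⟨hLlen, hLent, hLprod, hLtake⟩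
    funext j
    have h1 : t' j = (List.ofFn t').getD (j : ℕ) 1 := by
      rw [List.getD_eq_getElem _ _ (by rw [List.length_ofFn]; exact j.2),
        List.getElem_ofFn]
    rw [h1, hLL]
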